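/- For integers 0 ≤ ℓ < k ≤ n, the function λ ↦ ((σ_k(λ)/C(n,k)) / (σ_ℓ(λ)/C(n,ℓ)))^{1/(k-ℓ)} is strictly increasing on the cone Γ_k: if λ ∈ Γ_k and μ_i ≥ λ_i for all i with μ ≠ λ, then the value at μ is strictly greater than at λ. -/

import Mathlib

/-- The k-th elementary symmetric function on ℝ^n. -/
noncomputable def esymm (n k : ℕ) (l : Fin n → ℝ) : ℝ :=
  ∑ s ∈ Finset.powersetCard k (Finset.univ : Finset (Fin n)), ∏ i ∈ s, l i

namespace EsymmAux
open Polynomial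

lemma esymm_zero' (s : Multiset ℝ) : s.esymm 0 = 1 := by
  simp [Multiset.esymm]

lemma esymm_of_card_lt {s : Multiset ℝ} {j : ℕ} (h : Multiset.card s < j) : s.esymm j = 0 := by
  simp [Multiset.esymm, Multiset.powersetCard_eq_empty _ h]

lemma esymm_cons (a : ℝ) (s : Multiset ℝ) (j : ℕ) :
    (a ::ₘ s).esymm (j+1) = s.esymm (j+1) + a * s.esymm j := by
  simp only [Multiset.esymm, Multiset.powersetCard_cons, Multiset.map_add, Multiset.sum_add,
    Multiset.map_map, Function.comp_def, Multiset.prod_cons]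
  rw [← Multiset.sum_map_mul_left]

lemma esymm_one' (s : Multiset ℝ) : s.esymm 1 = s.sum := by
  induction s using Multiset.induction with
  | empty => simp [Multiset.esymm, Multiset.powersetCard_eq_empty _ (show Multiset.card (0:Multiset ℝ) < 1 by simp)]
  | cons a s ih =>
      have := esymm_cons a s 0
      simp only [zero_add] at this
      rw [Multiset.sum_cons, this, esymm_zero', ih]; ring

lemma esymm_card (s : Multiset ℝ) : s.esymm (Multiset.card s) = s.prod := by
  induction s using Multiset.induction with
  | empty => simp [Multiset.esymm]
  | cons a s ih =>
      rw [Multiset.card_cons, esymm_cons, esymm_of_card_lt (Nat.lt_succ_self _),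
        Multiset.prod_cons, ih]; ring

lemma prod_monic (s : Multiset ℝ) : ((s.map fun a => X + C a).prod).Monic :=
  monic_multiset_prod_of_monic _ _ (fun a _ => monic_X_add_C a)

lemma prod_natDegree (s : Multiset ℝ) :
    ((s.map fun a => X + C a).prod).natDegree = Multiset.card s := by
  rw [natDegree_multiset_prod_of_monic _ (fun p hp => by
    obtain ⟨a, _, rfl⟩ := Multiset.mem_map.1 hp; exact monic_X_add_C a)]
  rw [Multiset.map_map]
  have : (s.map (natDegree ∘ fun a => X + C a)) = s.map (fun _ => 1) :=
    Multiset.map_congr rfl fun a _ => by simp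
  rw [this, Multiset.map_const', Multiset.sum_replicate, smul_eq_mul, mul_one]

lemma esymm_map_add (s : Multiset ℝ) (x : ℝ) {r : ℕ} (hr : r ≤ Multiset.card s) :
    (s.map (· + x)).esymm r
      = ∑ n ∈ Finset.range (r+1),
          ((n + (Multiset.card s - r)).choose (Multiset.card s - r) : ℝ)
            * s.esymm (r - n) * x ^ n := by
  set m := Multiset.card s with hm
  set P := (s.map fun a => X + C a).prod with hP
  have h1 : ((s.map (· + x)).map fun a => X + C a).prod = taylor x P := by
    rw [hP, ← Polynomial.taylorAlgHom_apply, map_multiset_prod]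
    rw [Multiset.map_map, Multiset.map_map]
    refine congrArg _ (Multiset.map_congr rfl fun a _ => ?_)
    simp [taylorAlgHom_apply, taylor_apply]
    ring
  have h2 : (s.map (· + x)).esymm r = (taylor x P).coeff (m - r) := by
    rw [← h1]
    have h3 := Multiset.prod_X_add_C_coeff (s.map (· + x)) (k := m - r)
      (by rw [Multiset.card_map]; omega)
    rw [Multiset.card_map] at h3
    rw [h3]
    congr 1
    omega
  rw [h2, taylor_coeff]
  have hdeg : (hasseDeriv (m - r) P).natDegree < r + 1 := by
    have := natDegree_hasseDeriv_le P (m - r)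
    rw [prod_natDegree] at this
    omega
  rw [eval_eq_sum_range' hdeg]
  refine Finset.sum_congr rfl fun n hn => ?_
  have hn' : n ≤ r := by simpa [Nat.lt_succ_iff] using hn
  rw [hasseDeriv_coeff]
  have hcoeff : P.coeff (n + (m - r)) = s.esymm (r - n) := by
    rw [hP, Multiset.prod_X_add_C_coeff s (by omega : n + (m - r) ≤ Multiset.card s)]
    congr 1
    omega
  rw [hcoeff]

lemma exists_deriv_multiset (s : Multiset ℝ) (hs : 1 ≤ Multiset.card s) :
    ∃ s' : Multiset ℝ, Multiset.card s' = Multiset.card s - 1 ∧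
      ∀ i ≤ Multiset.card s - 1,
        (Multiset.card s : ℝ) * s'.esymm i = ((Multiset.card s : ℝ) - i) * s.esymm i := by
  set m := Multiset.card s with hm
  set P := (s.map fun a => X + C a).prod with hP
  have hPm : P.Monic := prod_monic s
  have hPdeg : P.natDegree = m := prod_natDegree s
  have hProots : P.roots = s.map (fun a => -a) := by
    have heq : s.map (fun a => X + C a) = (s.map fun a => -a).map (fun a => X - C a) := by
      rw [Multiset.map_map]
      exact Multiset.map_congr rfl fun a _ => by simp
    rw [hP, heq, roots_multiset_prod_X_sub_C]
  set Q := derivative P with hQ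
  have h1 : m - 1 + 1 = m := by omega
  have hc : P.coeff m = 1 := by rw [← hPdeg]; exact hPm.coeff_natDegree
  have hQc : Q.coeff (m - 1) = (m : ℝ) := by
    rw [hQ, coeff_derivative, h1, hc, one_mul, Nat.cast_sub hs]
    push_cast
    ring
  have hmR : (m : ℝ) ≠ 0 := Nat.cast_ne_zero.2 (by omega)
  have hQne : Q ≠ 0 := fun h => hmR (by rw [← hQc, h, coeff_zero])
  have hQdeg : Q.natDegree = m - 1 := by
    refine le_antisymm ?_ (le_natDegree_of_ne_zero (by rw [hQc]; exact hmR))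
    have h4 := natDegree_derivative_le P
    rw [hPdeg] at h4
    rw [hQ]
    omega
  have hQcard : Multiset.card Q.roots = m - 1 := by
    have hle : Multiset.card Q.roots ≤ m - 1 := hQdeg ▸ Q.card_roots' 
    have hge := P.card_roots_le_derivative
    rw [hProots, Multiset.card_map, ← hQ] at hge
    omega
  have hQlead : Q.leadingCoeff = (m : ℝ) := by
    rw [leadingCoeff, hQdeg, hQc]
  refine ⟨Q.roots.map (fun a => -a), by rw [Multiset.card_map, hQcard], fun i hi => ?_⟩
  have hcoeff := Polynomial.coeff_eq_esymm_roots_of_card (by rw [hQcard, hQdeg]) 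
    (k := (m - 1) - i) (by omega : (m - 1) - i ≤ Q.natDegree)
  rw [hQdeg, hQlead] at hcoeff
  have hi' : m - 1 - (m - 1 - i) = i := by omega
  rw [hi'] at hcoeff
  have hneg : (Q.roots.map (fun a => -a)).esymm i = (-1 : ℝ) ^ i * Q.roots.esymm i :=
    Multiset.esymm_neg Q.roots i
  have hder : Q.coeff (m - 1 - i) = s.esymm i * ((m : ℝ) - i) := by
    rw [hQ, coeff_derivative]
    have h2 : m - 1 - i + 1 = m - i := by omega
    rw [h2, hP, Multiset.prod_X_add_C_coeff s (by omega : m - i ≤ Multiset.card s)]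
    have h3 : Multiset.card s - (m - i) = i := by omega
    rw [h3]
    congr 1
    rw [Nat.cast_sub hi, Nat.cast_sub hs]
    push_cast
    ring
  rw [hcoeff] at hder
  rw [hneg, ← mul_assoc, hder]
  ring

lemma sq_sum_le (s : Multiset ℝ) :
    s.sum ^ 2 ≤ (Multiset.card s : ℝ) * (s.map (· ^ 2)).sum := by
  induction s using Multiset.induction with
  | empty => simp
  | cons a s ih =>
    simp only [Multiset.sum_cons, Multiset.map_cons, Multiset.card_cons]
    push_cast
    have hQ : 0 ≤ (s.map (· ^ 2)).sum :=
      Multiset.sum_nonneg (by intro x hx; obtain ⟨y, _, rfl⟩ := Multiset.mem_map.1 hx; positivity)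
    rcases Nat.eq_zero_or_pos (Multiset.card s) with h | h
    · have h0 : s = 0 := Multiset.card_eq_zero.1 h
      subst h0; simp
    · have hm : (1:ℝ) ≤ (Multiset.card s : ℝ) := by exact_mod_cast h
      nlinarith [sq_nonneg ((Multiset.card s : ℝ) * a - s.sum), ih, hQ, hm,
        mul_le_mul_of_nonneg_left ih (le_trans zero_le_one hm)]

lemma sum_sq_identity (s : Multiset ℝ) :
    s.sum ^ 2 = (s.map (· ^ 2)).sum + 2 * s.esymm 2 := by
  induction s using Multiset.induction with
  | empty =>
    rw [show ((0:Multiset ℝ)).esymm 2 = 0 from esymm_of_card_lt (by simp)]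
    simp
  | cons a s ih =>
    have h2 := esymm_cons a s 1
    rw [Multiset.sum_cons, Multiset.map_cons, Multiset.sum_cons, h2, esymm_one']
    linear_combination ih

lemma esymm_inv (s : Multiset ℝ) (h0 : ∀ a ∈ s, a ≠ 0) :
    ∀ i ≤ Multiset.card s,
      (s.map (·⁻¹)).esymm i * s.prod = s.esymm (Multiset.card s - i) := by
  induction s using Multiset.induction with
  | empty =>
    intro i hi
    simp only [Multiset.card_zero, Nat.le_zero] at hi
    subst hi
    simp [esymm_zero']
  | cons a s ih =>
    intro i hi
    have ha : a ≠ 0 := h0 a (Multiset.mem_cons_self a s)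
    have ih' := ih (fun b hb => h0 b (Multiset.mem_cons_of_mem hb))
    rcases i with _ | i
    · simp only [esymm_zero', one_mul, Nat.sub_zero]
      rw [← esymm_card]
    · rw [Multiset.map_cons, Multiset.prod_cons, esymm_cons]
      rcases Nat.lt_or_ge i (Multiset.card s) with hlt | hge
      · -- i + 1 ≤ card s
        have e1 := ih' (i+1) (by omega)
        have e2 := ih' i (by omega)
        have hidx : Multiset.card (a ::ₘ s) - (i+1) = (Multiset.card s - (i+1)) + 1 := by
          rw [Multiset.card_cons]; omega
        rw [hidx, esymm_cons]
        have hidx2 : Multiset.card s - (i + 1) + 1 = Multiset.card s - i := by omega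
        rw [hidx2]
        have hinva : a⁻¹ * a = 1 := inv_mul_cancel₀ ha
        linear_combination a * e1 + (a⁻¹ * a) * e2 + s.esymm (Multiset.card s - i) * hinva
      · -- i ≥ card s; since i+1 ≤ card s + 1, i = card s
        have hieq : i = Multiset.card s := by
          rw [Multiset.card_cons] at hi; omega
        subst hieq
        have e2 := ih' (Multiset.card s) (le_refl _)
        rw [Nat.sub_self, esymm_zero'] at e2
        have hz1 : (Multiset.map (fun x => x⁻¹) s).esymm (Multiset.card s + 1) = 0 :=
          esymm_of_card_lt (by rw [Multiset.card_map]; omega)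
        rw [hz1, show Multiset.card (a ::ₘ s) - (Multiset.card s + 1) = 0 by
          rw [Multiset.card_cons]; omega, esymm_zero']
        have hinva : a⁻¹ * a = 1 := inv_mul_cancel₀ ha
        linear_combination (a⁻¹ * a) * e2 + hinva

lemma newton_ineq (m : ℕ) (s : Multiset ℝ) (hs : Multiset.card s = m) (j : ℕ) (hj : 1 ≤ j) :
    s.esymm (j-1) / (m.choose (j-1) : ℝ) * (s.esymm (j+1) / (m.choose (j+1) : ℝ))
      ≤ (s.esymm j / (m.choose j : ℝ)) ^ 2 := by
  induction m using Nat.strong_induction_on generalizing s j with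
  | _ m ih =>
    rcases lt_or_ge m (j+1) with hmj | hmj
    · rw [esymm_of_card_lt (show Multiset.card s < j + 1 by omega)]
      simp only [zero_div, mul_zero]
      positivity
    rcases eq_or_lt_of_le (show j + 1 ≤ m from hmj) with heq | hlt
    · -- base case m = j+1
      subst heq
      have hprod : s.esymm (j+1) = s.prod := by rw [← hs, esymm_card]
      by_cases hz : s.prod = 0
      · rw [hprod, hz]
        simp only [zero_div, mul_zero]
        positivity
      · have h0 : ∀ a ∈ s, a ≠ 0 := fun a ha h => hz (Multiset.prod_eq_zero (h ▸ ha))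
        have hinv := esymm_inv s h0
        set z := s.map (·⁻¹) with hz'
        have e2 : z.esymm 2 * s.prod = s.esymm (j-1) := by
          have := hinv 2 (by omega)
          rw [this]; congr 1; omega
        have e1 : z.sum * s.prod = s.esymm j := by
          have := hinv 1 (by omega)
          rw [← esymm_one', this]; congr 1; omega
        have hCS : z.sum ^ 2 ≤ ((j:ℝ)+1) * (z.map (· ^ 2)).sum := by
          have := sq_sum_le z
          rw [hz', Multiset.card_map, hs] at this
          push_cast at this
          exact this
        have hID : z.sum ^ 2 = (z.map (· ^ 2)).sum + 2 * z.esymm 2 := sum_sq_identity z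
        have hc1 : ((j+1).choose (j+1) : ℝ) = 1 := by rw [Nat.choose_self]; norm_num
        have hc2 : ((j+1).choose j : ℝ) = (j:ℝ) + 1 := by
          have h8 : (j+1).choose j = (j+1).choose (j+1-1) := by congr 1
          rw [h8, Nat.choose_symm (by omega : 1 ≤ j + 1), Nat.choose_one_right]
          push_cast; ring
        have hdvd : 2 ∣ (j+1) * ((j+1) - 1) := by
          simpa [mul_comm] using (Nat.even_mul_succ_self j).two_dvd
        have hc3 : 2 * ((j+1).choose (j-1) : ℝ) = ((j:ℝ)+1) * j := by
          have hsymm : (j+1).choose (j-1) = (j+1).choose 2 := by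
            rw [← Nat.choose_symm (by omega : 2 ≤ j + 1)]
            congr 1
          have h2c : 2 * ((j+1).choose 2) = (j+1) * j := by
            rw [Nat.choose_two_right, Nat.mul_div_cancel' hdvd]
            simp
          rw [hsymm]
          exact_mod_cast congrArg (Nat.cast : ℕ → ℝ) h2c
        rw [← e2, ← e1, hprod, hc1, hc2]
        rw [div_one]
        have hp2 : (0:ℝ) < s.prod ^ 2 := by positivity
        have hC2pos : (0:ℝ) < ((j+1).choose (j-1) : ℝ) := by
          exact_mod_cast Nat.choose_pos (by omega)
        rw [div_pow, div_mul_eq_mul_div, div_le_div_iff₀ hC2pos (by positivity)]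
        have hz2 : z.esymm 2 = (z.sum^2 - (z.map (· ^ 2)).sum)/2 := by linarith [hID]
        have hc3' : (((j+1).choose (j-1) : ℕ) : ℝ) = ((j:ℝ)+1)*(j:ℝ)/2 := by linarith [hc3]
        rw [hz2, hc3']
        have hfac : ((((j:ℝ)+1) * s.prod^2) * (z.sum^2 - ((j:ℝ)+1)*(z.map (· ^ 2)).sum)) ≤ 0 :=
          mul_nonpos_iff.2 (Or.inl ⟨by positivity, by linarith [hCS]⟩)
        nlinarith [hfac]
    · -- inductive step
      obtain ⟨s', hcard, hrel⟩ := exists_deriv_multiset s (by omega)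
      rw [hs] at hcard hrel
      have key : ∀ i ≤ m - 1, s.esymm i / (m.choose i : ℝ)
          = s'.esymm i / (((m-1).choose i : ℕ) : ℝ) := by
        intro i hi
        have hA := hrel i hi
        have h5 : (m - i) * m.choose i = m * (m-1).choose i := by
          have h6 := Nat.add_one_mul_choose_eq (m-1) i
          rw [show m - 1 + 1 = m by omega] at h6
          have h7 := Nat.choose_succ_right_eq m i
          rw [h6, h7, mul_comm]
        have hB : ((m:ℝ) - i) * (m.choose i : ℝ) = (m : ℝ) * (((m-1).choose i : ℕ) : ℝ) := by
          have := congrArg (Nat.cast : ℕ → ℝ) h5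
          push_cast [Nat.cast_sub (by omega : i ≤ m)] at this
          exact_mod_cast this
        have hCm : ((m.choose i : ℕ) : ℝ) ≠ 0 := by
          have : 0 < m.choose i := Nat.choose_pos (by omega)
          exact_mod_cast this.ne'
        have hCm1 : (((m-1).choose i : ℕ) : ℝ) ≠ 0 := by
          have : 0 < (m-1).choose i := Nat.choose_pos (by omega)
          exact_mod_cast this.ne'
        rw [div_eq_div_iff hCm hCm1]
        have hm0 : (m:ℝ) ≠ 0 := Nat.cast_ne_zero.2 (by omega)
        apply mul_left_cancel₀ hm0
        linear_combination (-((m.choose i : ℕ) : ℝ)) * hA - s.esymm i * hB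
      rw [key (j-1) (by omega), key j (by omega), key (j+1) (by omega)]
      exact ih (m-1) (by omega) s' hcard j hj

lemma esymm_map_add_pos (s : Multiset ℝ) (x : ℝ) (hx : 0 ≤ x) {r : ℕ}
    (hr : r ≤ Multiset.card s) (hpos : ∀ j ≤ r, 0 < s.esymm j) :
    0 < (s.map (· + x)).esymm r := by
  rw [esymm_map_add s x hr]
  apply Finset.sum_pos'
  · intro n hn
    have hn' : n ≤ r := Nat.lt_succ_iff.1 (Finset.mem_range.1 hn)
    have h1 := hpos (r - n) (by omega)
    positivity
  · refine ⟨0, Finset.mem_range.2 (by omega), ?_⟩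
    have h1 := hpos r le_rfl
    have h2 : 0 < (0 + (Multiset.card s - r)).choose (Multiset.card s - r) :=
      Nat.choose_pos (by omega)
    have h2' : (0:ℝ) < ((0 + (Multiset.card s - r)).choose (Multiset.card s - r) : ℝ) := by
      exact_mod_cast h2
    simpa using by positivity

lemma cone_removal (k : ℕ) : ∀ (a : ℝ) (t : Multiset ℝ), k ≤ Multiset.card t + 1 →
    (∀ j ≤ k, 0 < (a ::ₘ t).esymm j) → ∀ j < k, 0 < t.esymm j := by
  induction k with
  | zero => intro a t _ _ j hj; omega
  | succ k ihk =>
    intro a t hcard hpos j hj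
    have hprev : ∀ i < k, 0 < t.esymm i :=
      ihk a t (by omega) (fun i hi => hpos i (by omega))
    rcases Nat.lt_or_ge j k with h | h
    · exact hprev j h
    have hjk : j = k := by omega
    subst hjk
    rcases Nat.eq_zero_or_pos j with rfl | hj1
    · rw [esymm_zero']; norm_num
    by_contra hng
    push_neg at hng
    set m := Multiset.card t with hm
    have hjm : j ≤ m := by omega
    obtain ⟨k', rfl⟩ : ∃ k', j = k' + 1 := ⟨j - 1, by omega⟩
    -- the shifted esymm as explicit function
    set g : ℝ → ℝ := fun x => ∑ p ∈ Finset.range (k' + 2),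
        ((p + (m - (k'+1))).choose (m - (k'+1)) : ℝ) * t.esymm ((k'+1) - p) * x ^ p with hg
    have hgx : ∀ x : ℝ, (t.map (· + x)).esymm (k'+1) = g x := fun x =>
      esymm_map_add t x (by omega)
    have hgc : Continuous g := by
      apply continuous_finset_sum
      intro p _
      exact (continuous_const.mul (continuous_pow p))
    have hek1 : 0 < t.esymm k' := hprev k' (by omega)
    have hg0 : g 0 = t.esymm (k'+1) := by
      rw [← hgx 0]
      have : t.map (· + (0:ℝ)) = t := by
        have : (fun x : ℝ => x + 0) = id := by funext x; simp
        rw [this, Multiset.map_id]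
      rw [this]
    set x0 : ℝ := (1 - t.esymm (k'+1)) / t.esymm k' with hx0
    have hx0nn : 0 ≤ x0 := by
      apply div_nonneg _ hek1.le
      linarith
    have hgx0 : 0 ≤ g x0 := by
      show (0:ℝ) ≤ ∑ p ∈ Finset.range (k' + 2),
        ((p + (m - (k'+1))).choose (m - (k'+1)) : ℝ) * t.esymm ((k'+1) - p) * x0 ^ p
      have hmem0 : 0 ∈ Finset.range (k'+2) := by simp
      have hmem1 : 1 ∈ (Finset.range (k'+2)).erase 0 := by simp
      rw [← Finset.add_sum_erase _ _ hmem0, ← Finset.add_sum_erase _ _ hmem1]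
      have hf1 : 1 - t.esymm (k'+1)
          ≤ ((1 + (m - (k'+1))).choose (m - (k'+1)) : ℝ) * t.esymm ((k'+1) - 1) * x0 ^ 1 := by
        have hc : (1:ℝ) ≤ ((1 + (m - (k'+1))).choose (m - (k'+1)) : ℝ) := by
          have : 0 < (1 + (m - (k'+1))).choose (m - (k'+1)) := Nat.choose_pos (by omega)
          exact_mod_cast this
        have hx0v : t.esymm k' * x0 = 1 - t.esymm (k'+1) := by
          rw [hx0, mul_div_cancel₀]
          exact hek1.ne'
        have hsub : (k' + 1) - 1 = k' := by omega
        rw [hsub, pow_one, mul_assoc, hx0v]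
        nlinarith [hc, hng]
      have hrest : 0 ≤ ∑ p ∈ ((Finset.range (k'+2)).erase 0).erase 1,
          ((p + (m - (k'+1))).choose (m - (k'+1)) : ℝ) * t.esymm ((k'+1) - p) * x0 ^ p := by
        apply Finset.sum_nonneg
        intro p hp
        have hp0 : p ≠ 0 := Finset.mem_erase.1 (Finset.mem_of_mem_erase hp) |>.1
        have hepos := hprev ((k'+1) - p) (by omega)
        positivity
      have hf0 : ((0 + (m - (k'+1))).choose (m - (k'+1)) : ℝ) * t.esymm ((k'+1) - 0) * x0 ^ 0
          = t.esymm (k'+1) := by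
        simp [Nat.choose_self]
      rw [hf0]
      linarith [hf1, hrest]
    -- IVT
    have hg0le : g 0 ≤ 0 := by rw [hg0]; exact hng
    obtain ⟨ρ, hρmem, hρ⟩ : ∃ ρ ∈ Set.Icc (0:ℝ) x0, g ρ = 0 := by
      have hsub := intermediate_value_Icc hx0nn hgc.continuousOn
      have h0mem : (0:ℝ) ∈ Set.Icc (g 0) (g x0) := ⟨hg0le, hgx0⟩
      obtain ⟨ρ, hρ1, hρ2⟩ := hsub h0mem
      exact ⟨ρ, hρ1, hρ2⟩
    have hρ0 : 0 ≤ ρ := hρmem.1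
    set y := t.map (· + ρ) with hy
    have hycard : Multiset.card y = m := by rw [hy, Multiset.card_map]
    have hyk : y.esymm (k'+1) = 0 := by rw [hy, hgx ρ]; exact hρ
    have hylow : ∀ i ≤ k', 0 < y.esymm i := by
      intro i hi
      exact esymm_map_add_pos t ρ hρ0 (by omega) (fun j hj => hprev j (by omega))
    have hytop : 0 < y.esymm ((k'+1)+1) := by
      have h1 : 0 < ((a ::ₘ t).map (· + ρ)).esymm ((k'+1)+1) := by
        apply esymm_map_add_pos (a ::ₘ t) ρ hρ0
        · rw [Multiset.card_cons]; omega
        · intro j hj; exact hpos j hj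
      rw [Multiset.map_cons, esymm_cons, ← hy, hyk, mul_zero, add_zero] at h1
      exact h1
    rcases Nat.lt_or_ge m (k'+2) with hsmall | hbig
    · rw [esymm_of_card_lt (by omega : Multiset.card y < (k'+1) + 1)] at hytop
      exact lt_irrefl _ hytop
    · have hN := newton_ineq m y hycard (k'+1) (by omega)
      rw [hyk] at hN
      simp only [zero_div] at hN
      rw [zero_pow (by norm_num)] at hN
      have hgt : 0 < y.esymm ((k'+1)-1) / (m.choose ((k'+1)-1) : ℝ)
          * (y.esymm ((k'+1)+1) / (m.choose ((k'+1)+1) : ℝ)) := by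
        have h1 : 0 < y.esymm k' := hylow k' le_rfl
        have h2 : 0 < (m.choose k' : ℝ) := by
          exact_mod_cast Nat.choose_pos (by omega : k' ≤ m)
        have h3 : 0 < (m.choose (k'+2) : ℝ) := by
          exact_mod_cast Nat.choose_pos (by omega : k' + 2 ≤ m)
        have hsub : (k'+1) - 1 = k' := by omega
        rw [hsub]
        positivity
      linarith [hgt, hN]

lemma choose_strict_logconcave (m j : ℕ) (hj : 1 ≤ j) (hjm : j + 1 ≤ m) :
    (m.choose (j-1)) * (m.choose (j+1)) < (m.choose j)^2 := by
  have h7 := Nat.choose_succ_right_eq m j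
  have h8 := Nat.choose_succ_right_eq m (j-1)
  rw [show j - 1 + 1 = j by omega] at h8
  -- h8 : m.choose j * j = m.choose (j-1) * (m - (j-1))
  have hBpos : 0 < m.choose j := Nat.choose_pos (by omega)
  have key : m.choose (j-1) * (m.choose (j+1)) * ((m - (j-1)) * (j+1))
      = (m.choose j)^2 * (j * (m - j)) := by
    calc m.choose (j-1) * (m.choose (j+1)) * ((m - (j-1)) * (j+1))
        = (m.choose (j-1) * (m - (j-1))) * (m.choose (j+1) * (j+1)) := by ring
      _ = (m.choose j * j) * (m.choose j * (m - j)) := by rw [← h8, h7]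
      _ = (m.choose j)^2 * (j * (m - j)) := by ring
  have hlt : j * (m - j) < (m - (j-1)) * (j+1) := by
    have h1 : m - (j-1) = m - j + 1 := by omega
    rw [h1]
    have h2 : 1 ≤ m - j := by omega
    nlinarith
  have hpos2 : 0 < (m - (j-1)) * (j+1) := by
    have : 1 ≤ m - (j - 1) := by omega
    positivity
  by_contra hcon
  push_neg at hcon
  have hmono : (m.choose j)^2 * ((m - (j-1)) * (j+1)) ≤
      m.choose (j-1) * (m.choose (j+1)) * ((m - (j-1)) * (j+1)) :=
    Nat.mul_le_mul_right _ hcon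
  rw [key] at hmono
  have hBB : 0 < (m.choose j)^2 := by positivity
  have h9 : (m.choose j)^2 * (j * (m-j)) < (m.choose j)^2 * ((m - (j-1)) * (j+1)) :=
    mul_lt_mul_of_pos_left hlt hBB
  omega

lemma adjacent (t : Multiset ℝ) (j : ℕ) (hj : 1 ≤ j) (hjm : j + 1 ≤ Multiset.card t)
    (hpos : ∀ i ≤ j+1, 0 < t.esymm i) :
    t.esymm (j+1) * t.esymm (j-1) < t.esymm j ^ 2 := by
  set m := Multiset.card t with hm
  have hN := newton_ineq m t rfl j hj
  have hA : (0:ℝ) < (m.choose (j-1) : ℝ) := by exact_mod_cast Nat.choose_pos (by omega)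
  have hB : (0:ℝ) < (m.choose j : ℝ) := by exact_mod_cast Nat.choose_pos (by omega)
  have hD : (0:ℝ) < (m.choose (j+1) : ℝ) := by exact_mod_cast Nat.choose_pos (by omega)
  have hb : ((m.choose (j-1)) : ℝ) * (m.choose (j+1)) < ((m.choose j) : ℝ)^2 := by
    exact_mod_cast choose_strict_logconcave m j hj hjm
  rw [div_mul_div_comm, div_pow, div_le_div_iff₀ (by positivity) (by positivity)] at hN
  -- hN : σ(j-1)*σ(j+1) * (choose j)^2 ≤ σ j^2 * (choose (j-1) * choose (j+1))
  have hsj : 0 < t.esymm j := hpos j (by omega)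
  have h1 : t.esymm j^2 * ((m.choose (j-1) : ℝ) * (m.choose (j+1))) < t.esymm j^2 * ((m.choose j : ℝ)^2) :=
    mul_lt_mul_of_pos_left hb (by positivity)
  have h2 : t.esymm (j-1) * t.esymm (j+1) * ((m.choose j : ℝ)^2) < t.esymm j^2 * ((m.choose j : ℝ)^2) :=
    lt_of_le_of_lt hN h1
  have h3 := lt_of_mul_lt_mul_right h2 (by positivity : (0:ℝ) ≤ ((m.choose j : ℝ)^2))
  nlinarith [h3]

lemma chain (t : Multiset ℝ) (l : ℕ) (hl : 1 ≤ l) :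
    ∀ k, l < k → (∀ j ≤ k, 0 < t.esymm j) →
    t.esymm k * t.esymm (l-1) < t.esymm (k-1) * t.esymm l := by
  intro k
  induction k with
  | zero => omega
  | succ k ihk =>
    intro hlk hpos
    have hkm : k + 1 ≤ Multiset.card t := by
      by_contra h
      push_neg at h
      have h2 := hpos (k+1) le_rfl
      rw [esymm_of_card_lt h] at h2
      exact lt_irrefl _ h2
    have hsub : k + 1 - 1 = k := by omega
    rcases Nat.lt_or_ge l k with hlt | hge
    · -- step case : l < k
      have IH := ihk hlt (fun j hj => hpos j (by omega))
      have hadj := adjacent t k (by omega) hkm hpos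
      rw [hsub]
      have hp0 : 0 < t.esymm (l-1) := hpos (l-1) (by omega)
      have hpk : 0 < t.esymm k := hpos k (by omega)
      have hpk1 : 0 < t.esymm (k-1) := hpos (k-1) (by omega)
      have h1 : t.esymm (k+1) * t.esymm (k-1) * t.esymm (l-1) < t.esymm k^2 * t.esymm (l-1) :=
        mul_lt_mul_of_pos_right hadj hp0
      have h2 : t.esymm k * (t.esymm k * t.esymm (l-1)) < t.esymm k * (t.esymm (k-1) * t.esymm l) :=
        mul_lt_mul_of_pos_left IH hpk
      refine lt_of_mul_lt_mul_right ?_ hpk1.le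
      nlinarith [h1, h2]
    · -- base : l = k
      have hlk' : l = k := by omega
      subst hlk'
      have hadj := adjacent t l hl hkm hpos
      rw [hsub]
      nlinarith [hadj]

lemma cone_step (t : Multiset ℝ) (a b : ℝ) (hab : a ≤ b) (k : ℕ)
    (hcard : k ≤ Multiset.card t + 1)
    (hpos : ∀ j ≤ k, 0 < (a ::ₘ t).esymm j) :
    ∀ j ≤ k, 0 < (b ::ₘ t).esymm j := by
  have hrem := cone_removal k a t hcard hpos
  intro j hj
  rcases j with _ | i
  · rw [esymm_zero']; norm_num
  · rw [esymm_cons]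
    have h1 := hpos (i+1) hj
    rw [esymm_cons] at h1
    have h2 := hrem i (by omega)
    nlinarith [h1, h2]

lemma cross_step (t : Multiset ℝ) (a b : ℝ) (hab : a < b) (l k : ℕ) (hlk : l < k)
    (hcard : k ≤ Multiset.card t + 1)
    (hpos : ∀ j ≤ k, 0 < (a ::ₘ t).esymm j) :
    (a ::ₘ t).esymm k * (b ::ₘ t).esymm l < (b ::ₘ t).esymm k * (a ::ₘ t).esymm l := by
  have hrem := cone_removal k a t hcard hpos
  obtain ⟨k', rfl⟩ : ∃ k', k = k' + 1 := ⟨k - 1, by omega⟩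
  rcases Nat.eq_zero_or_pos l with rfl | hl1
  · simp only [esymm_zero', mul_one]
    rw [esymm_cons, esymm_cons]
    have hs := hrem k' (by omega)
    nlinarith [hs]
  obtain ⟨l', rfl⟩ : ∃ l', l = l' + 1 := ⟨l - 1, by omega⟩
  have hB : t.esymm (k'+1) * t.esymm l' < t.esymm k' * t.esymm (l'+1) := by
    have hpl' : 0 < t.esymm l' := hrem l' (by omega)
    have hpl'1 : 0 < t.esymm (l'+1) := hrem (l'+1) (by omega)
    have hpk' : 0 < t.esymm k' := hrem k' (by omega)
    rcases le_or_gt (t.esymm (k'+1)) 0 with hneg | hpos'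
    · nlinarith [hpl', hpl'1, hpk', hneg]
    · have hall : ∀ j ≤ k'+1, 0 < t.esymm j := by
        intro j hj
        rcases Nat.lt_or_ge j (k'+1) with h | h
        · exact hrem j h
        · have : j = k'+1 := by omega
          subst this; exact hpos'
      have hc := chain t (l'+1) (by omega) (k'+1) (by omega) hall
      simpa using hc
  rw [esymm_cons, esymm_cons, esymm_cons, esymm_cons]
  nlinarith [mul_pos (sub_pos.2 hab) (sub_pos.2 hB)]

lemma bridge (n j : ℕ) (f : Fin n → ℝ) :
    esymm n j f = (Multiset.map f Finset.univ.val).esymm j := by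
  rw [Finset.esymm_map_val]
  rfl

lemma univ_val_eq (n : ℕ) (i : Fin n) :
    (Finset.univ : Finset (Fin n)).val = i ::ₘ (Finset.univ.erase i).val := by
  conv_lhs => rw [← Finset.insert_erase (Finset.mem_univ i)]
  rw [Finset.insert_val, Multiset.ndinsert_of_notMem (by
    simp only [Finset.erase_val]
    exact Multiset.Nodup.notMem_erase Finset.univ.nodup)]

lemma map_ms (n : ℕ) (f : Fin n → ℝ) (i : Fin n) :
    Multiset.map f Finset.univ.val = f i ::ₘ Multiset.map f (Finset.univ.erase i).val := by
  conv_lhs => rw [univ_val_eq n i]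
  rw [Multiset.map_cons]

lemma map_update_ms (n : ℕ) (f : Fin n → ℝ) (i : Fin n) (c : ℝ) :
    Multiset.map (Function.update f i c) Finset.univ.val
      = c ::ₘ Multiset.map f (Finset.univ.erase i).val := by
  rw [univ_val_eq n i, Multiset.map_cons, Function.update_self]
  congr 1
  apply Multiset.map_congr rfl
  intro j hj
  have hj' : j ≠ i := (Finset.mem_erase.1 (Finset.mem_val.mp hj)).1
  exact Function.update_of_ne hj' _ _

lemma card_erase (n : ℕ) (f : Fin n → ℝ) (i : Fin n) :
    Multiset.card (Multiset.map f (Finset.univ.erase i).val) = n - 1 := by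
  rw [Multiset.card_map]
  have h1 : Multiset.card (Finset.univ.erase i).val = (Finset.univ.erase i).card := rfl
  rw [h1, Finset.card_erase_of_mem (Finset.mem_univ i), Finset.card_univ, Fintype.card_fin]

lemma assemble (n k ℓ : ℕ) (hlk : ℓ < k) (hkn : k ≤ n) (lam mu : Fin n → ℝ)
    (hlam : ∀ i ≤ k, 0 < esymm n i lam) (hge : ∀ i, lam i ≤ mu i) :
    ∀ S : Finset (Fin n),
      (∀ j ≤ k, 0 < esymm n j (fun i => if i ∈ S then mu i else lam i)) ∧
      (esymm n k lam / esymm n ℓ lam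
        ≤ esymm n k (fun i => if i ∈ S then mu i else lam i)
            / esymm n ℓ (fun i => if i ∈ S then mu i else lam i)) ∧
      ((∃ i ∈ S, lam i < mu i) →
        esymm n k lam / esymm n ℓ lam
          < esymm n k (fun i => if i ∈ S then mu i else lam i)
              / esymm n ℓ (fun i => if i ∈ S then mu i else lam i)) := by
  intro S
  induction S using Finset.induction_on with
  | empty =>
      have hfe : (fun i => if i ∈ (∅ : Finset (Fin n)) then mu i else lam i) = lam := by
        funext i; simp
      rw [hfe]
      exact ⟨hlam, le_refl _, by simp⟩
  | @insert i S hiS IH =>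
      obtain ⟨IH1, IH2, IH3⟩ := IH
      set f : Fin n → ℝ := fun j => if j ∈ S then mu j else lam j with hf
      have hfi : f i = lam i := by rw [hf]; simp [hiS]
      have hupd : (fun j => if j ∈ insert i S then mu j else lam j)
          = Function.update f i (mu i) := by
        funext j
        by_cases hj : j = i
        · subst hj; simp [Function.update_self]
        · simp [Function.update_of_ne hj, hf, Finset.mem_insert, hj]
      rw [hupd]
      set t := Multiset.map f (Finset.univ.erase i).val with ht
      have hmsf : Multiset.map f Finset.univ.val = lam i ::ₘ t := by
        rw [map_ms n f i, hfi]
      have hmsu : Multiset.map (Function.update f i (mu i)) Finset.univ.val = mu i ::ₘ t :=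
        map_update_ms n f i (mu i)
      have hn1 : 0 < n := i.pos
      have hcardt : k ≤ Multiset.card t + 1 := by
        rw [ht, card_erase]; omega
      have hposf : ∀ j ≤ k, 0 < (lam i ::ₘ t).esymm j := by
        intro j hj
        rw [← hmsf, ← bridge]
        exact IH1 j hj
      have hposu : ∀ j ≤ k, 0 < esymm n j (Function.update f i (mu i)) := by
        intro j hj
        rw [bridge, hmsu]
        exact cone_step t (lam i) (mu i) (hge i) k hcardt hposf j hj
      have hplms : 0 < esymm n ℓ f := IH1 ℓ hlk.le
      have hpums : 0 < esymm n ℓ (Function.update f i (mu i)) := hposu ℓ hlk.le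
      rcases eq_or_lt_of_le (hge i) with heq | hlt
      · have hid : Function.update f i (mu i) = f := by
          rw [← heq, ← hfi]
          exact Function.update_eq_self i f
        rw [hid]
        refine ⟨fun j hj => IH1 j hj, IH2, ?_⟩
        rintro ⟨j, hm, hlt'⟩
        rcases Finset.mem_insert.1 hm with rfl | hmS
        · exact absurd hlt' (by rw [heq]; exact lt_irrefl _)
        · exact IH3 ⟨j, hmS, hlt'⟩
      · have hcross := cross_step t (lam i) (mu i) hlt ℓ k hlk hcardt hposf
        have hplms' : 0 < (lam i ::ₘ t).esymm ℓ := hposf ℓ hlk.le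
        have hpums' : 0 < (mu i ::ₘ t).esymm ℓ := by
          have := hpums
          rw [bridge, hmsu] at this
          exact this
        have hstep : esymm n k f / esymm n ℓ f
            < esymm n k (Function.update f i (mu i)) / esymm n ℓ (Function.update f i (mu i)) := by
          rw [bridge n k f, bridge n ℓ f, bridge n k _, bridge n ℓ _, hmsf, hmsu]
          exact (div_lt_div_iff₀ hplms' hpums').2 hcross
        exact ⟨hposu, le_trans IH2 hstep.le, fun _ => lt_of_le_of_lt IH2 hstep⟩

end EsymmAux

open EsymmAux in
theorem esymm_ratio_strict_mono (n k ℓ : ℕ) (hlk : ℓ < k) (hkn : k ≤ n)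
    (lam mu : Fin n → ℝ) (hlam : ∀ i ≤ k, 0 < esymm n i lam)
    (hge : ∀ i, lam i ≤ mu i) (hne : mu ≠ lam) :
    ((esymm n k lam / (n.choose k : ℝ)) / (esymm n ℓ lam / (n.choose ℓ : ℝ)))
        ^ ((1:ℝ) / ((k : ℝ) - (ℓ : ℝ)))
      < ((esymm n k mu / (n.choose k : ℝ)) / (esymm n ℓ mu / (n.choose ℓ : ℝ)))
        ^ ((1:ℝ) / ((k : ℝ) - (ℓ : ℝ))) := by
  obtain ⟨hposmu', hle, hstrict⟩ := assemble n k ℓ hlk hkn lam mu hlam hge Finset.univ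
  have hfu : (fun i => if i ∈ (Finset.univ : Finset (Fin n)) then mu i else lam i) = mu := by
    funext i; simp
  rw [hfu] at hposmu' hle hstrict
  have hexists : ∃ i, lam i < mu i := by
    by_contra h
    push_neg at h
    exact hne (funext fun i => le_antisymm (h i) (hge i))
  obtain ⟨i0, hi0⟩ := hexists
  have hR := hstrict ⟨i0, Finset.mem_univ i0, hi0⟩
  have hkl : 0 < esymm n k lam := hlam k le_rfl
  have hll : 0 < esymm n ℓ lam := hlam ℓ hlk.le
  have hkm : 0 < esymm n k mu := hposmu' k le_rfl
  have hlm : 0 < esymm n ℓ mu := hposmu' ℓ hlk.le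
  have hCk : (0:ℝ) < (n.choose k : ℝ) := by exact_mod_cast Nat.choose_pos hkn
  have hCl : (0:ℝ) < (n.choose ℓ : ℝ) := by exact_mod_cast Nat.choose_pos (by omega)
  have hrw : ∀ f : Fin n → ℝ, 0 < esymm n ℓ f →
      (esymm n k f / (n.choose k : ℝ)) / (esymm n ℓ f / (n.choose ℓ : ℝ))
        = (esymm n k f / esymm n ℓ f) * ((n.choose ℓ : ℝ) / (n.choose k : ℝ)) := by
    intro f hf
    rw [div_div_div_comm, div_eq_mul_inv, inv_div]
  rw [hrw lam hll, hrw mu hlm]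
  have hA : 0 < (esymm n k lam / esymm n ℓ lam) * ((n.choose ℓ : ℝ) / (n.choose k : ℝ)) := by
    positivity
  have hAB : (esymm n k lam / esymm n ℓ lam) * ((n.choose ℓ : ℝ) / (n.choose k : ℝ))
      < (esymm n k mu / esymm n ℓ mu) * ((n.choose ℓ : ℝ) / (n.choose k : ℝ)) :=
    mul_lt_mul_of_pos_right hR (by positivity)
  have hexp : 0 < (1:ℝ) / ((k:ℝ) - (ℓ:ℝ)) := by
    have h1 : (ℓ:ℝ) < (k:ℝ) := by exact_mod_cast hlk
    have h2 : 0 < (k:ℝ) - (ℓ:ℝ) := by linarith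
    positivity
  exact Real.rpow_lt_rpow hA.le hAB hexp
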